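/- Let J be a nilpotent endomorphism of a finite-dimensional vector space V. For each i ≥ 1, there is an exact sequence 0 → (0:J^{i−1})/J(0:J^i) → (0:J^i)/J(0:J^{i+1}) → (ker J ∩ im J^{i−1})/(ker J ∩ im J^i) → 0, where (0:J^k) = ker J^k, and moreover (0:J^i)/J(0:J^{i+1}) ≅ (ker J^i + im J)/im J. -/

import Mathlib

open Module LinearMap

/-- for `J` nilpotent and `i ≥ 1` there is an exact sequence
`0 → (0:J^{i−1})/J(0:J^i) → (0:J^i)/J(0:J^{i+1}) → (ker J ∩ im J^{i−1})/(ker J ∩ im J^i) → 0`,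
where the first map is induced by the inclusion `ker J^{i-1} ⊆ ker J^i` and the second by
`J^{i-1}`; moreover `(0:J^i)/J(0:J^{i+1}) ≅ (ker J^i + im J)/im J`. -/
theorem exact_sequence_of_nilpotent (K V : Type*) [Field K] [AddCommGroup V] [Module K V]
    [FiniteDimensional K V] (J : V →ₗ[K] V) (hJ : IsNilpotent J) (i : ℕ) (hi : 1 ≤ i) :
    ∀ A₁ A₂ A₃ A₄ : Submodule K V, ∀ S₁ S₂ S₃ S₄ : Submodule K V,
      A₁ = ker (J ^ (i - 1)) → S₁ = Submodule.map J (ker (J ^ i)) →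
      A₂ = ker (J ^ i) → S₂ = Submodule.map J (ker (J ^ (i + 1))) →
      A₃ = ker J ⊓ range (J ^ (i - 1)) → S₃ = ker J ⊓ range (J ^ i) →
      A₄ = ker (J ^ i) ⊔ range J → S₄ = range J →
      ∀ (hA : A₁ ≤ A₂)
        (h₁ : S₁.comap A₁.subtype ≤ (S₂.comap A₂.subtype).comap (Submodule.inclusion hA))
        (hg : ∀ v ∈ A₂, (J ^ (i - 1)) v ∈ A₃)
        (h₂ : S₂.comap A₂.subtype ≤
          (S₃.comap A₃.subtype).comap ((J ^ (i - 1)).restrict hg)),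
        Function.Injective
            (Submodule.mapQ (S₁.comap A₁.subtype) (S₂.comap A₂.subtype)
              (Submodule.inclusion hA) h₁) ∧
        Function.Surjective
            (Submodule.mapQ (S₂.comap A₂.subtype) (S₃.comap A₃.subtype)
              ((J ^ (i - 1)).restrict hg) h₂) ∧
        LinearMap.range
            (Submodule.mapQ (S₁.comap A₁.subtype) (S₂.comap A₂.subtype)
              (Submodule.inclusion hA) h₁) =
          LinearMap.ker
            (Submodule.mapQ (S₂.comap A₂.subtype) (S₃.comap A₃.subtype)
              ((J ^ (i - 1)).restrict hg) h₂) ∧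
        Nonempty ((A₂ ⧸ S₂.comap A₂.subtype) ≃ₗ[K] (A₄ ⧸ S₄.comap A₄.subtype)) := by
  intro A₁ A₂ A₃ A₄ S₁ S₂ S₃ S₄ hA₁ hS₁ hA₂ hS₂ hA₃ hS₃ hA₄ hS₄ hA h₁ hg h₂
  have hn : i - 1 + 1 = i := Nat.succ_pred_eq_of_pos hi
  have hpow : J ∘ₗ J ^ (i - 1) = J ^ i := by
    rw [← Module.End.mul_eq_comp, ← pow_succ', hn]
  have hpow2 : (J ^ (i - 1)) ∘ₗ J = J ^ i := by
    rw [← Module.End.mul_eq_comp, ← pow_succ, hn]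
  have hpow3 : (J ^ i) ∘ₗ J = J ^ (i + 1) := by
    rw [← Module.End.mul_eq_comp, ← pow_succ]
  have hpow4 : J ∘ₗ J ^ i = J ^ (i + 1) := by
    rw [← Module.End.mul_eq_comp, ← pow_succ']
  have hp1 : ∀ v : V, J ((J ^ (i - 1)) v) = (J ^ i) v := fun v => DFunLike.congr_fun hpow v
  have hp2 : ∀ v : V, (J ^ (i - 1)) (J v) = (J ^ i) v := fun v => DFunLike.congr_fun hpow2 v
  have hp3 : ∀ v : V, (J ^ i) (J v) = (J ^ (i + 1)) v := fun v => DFunLike.congr_fun hpow3 v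
  have hp4 : ∀ v : V, J ((J ^ i) v) = (J ^ (i + 1)) v := fun v => DFunLike.congr_fun hpow4 v
  subst hA₁ hS₁ hA₂ hS₂ hA₃ hS₃ hA₄ hS₄
  refine ⟨?_, ?_, ?_, ?_⟩
  · -- injectivity
    rw [← LinearMap.ker_eq_bot, eq_bot_iff]
    intro x hx
    obtain ⟨a, rfl⟩ := Submodule.Quotient.mk_surjective _ x
    rw [LinearMap.mem_ker, Submodule.mapQ_apply, Submodule.Quotient.mk_eq_zero] at hx
    rw [Submodule.mem_bot, Submodule.Quotient.mk_eq_zero]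
    simp only [Submodule.mem_comap, Submodule.coe_subtype, Submodule.coe_inclusion,
      Submodule.mem_map] at hx ⊢
    obtain ⟨y, hy, hJy⟩ := hx
    refine ⟨y, ?_, hJy⟩
    have hx1 : (J ^ (i - 1)) (a : V) = 0 := a.2
    show (J ^ i) y = 0
    rw [← hp2, hJy, hx1]
  · -- surjectivity
    intro z
    obtain ⟨b, rfl⟩ := Submodule.Quotient.mk_surjective _ z
    obtain ⟨hb1, x, hx⟩ := b.2
    have hxmem : x ∈ ker (J ^ i) := by
      show (J ^ i) x = 0
      rw [← hp1, hx]
      exact hb1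
    refine ⟨Submodule.Quotient.mk ⟨x, hxmem⟩, ?_⟩
    rw [Submodule.mapQ_apply]
    congr 1
    exact Subtype.ext (by simpa [LinearMap.restrict_apply] using hx)
  · -- exactness
    ext z
    obtain ⟨a, rfl⟩ := Submodule.Quotient.mk_surjective _ z
    simp only [LinearMap.mem_range, LinearMap.mem_ker]
    constructor
    · rintro ⟨w, hw⟩
      obtain ⟨c, rfl⟩ := Submodule.Quotient.mk_surjective _ w
      rw [← hw, Submodule.mapQ_apply, Submodule.mapQ_apply, Submodule.Quotient.mk_eq_zero]
      simp only [Submodule.mem_comap]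
      have hc0 : (J ^ (i - 1)) ((Submodule.inclusion hA c : ker (J ^ i)) : V) = 0 := c.2
      show (((J ^ (i - 1)).restrict hg) _ : V) ∈ _
      rw [LinearMap.restrict_apply]
      simp only [hc0]
      exact Submodule.zero_mem _
    · intro hz
      rw [Submodule.mapQ_apply, Submodule.Quotient.mk_eq_zero] at hz
      simp only [Submodule.mem_comap] at hz
      have hz' : (J ^ (i - 1)) (a : V) ∈ ker J ⊓ range (J ^ i) := by
        simpa [LinearMap.restrict_apply] using hz
      obtain ⟨hk, y, hy⟩ := hz'
      have hcker : (a : V) - J y ∈ ker (J ^ (i - 1)) := by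
        show (J ^ (i - 1)) ((a : V) - J y) = 0
        rw [map_sub, hp2, hy, sub_self]
      have hymem : y ∈ ker (J ^ (i + 1)) := by
        show (J ^ (i + 1)) y = 0
        rw [← hp4, hy, hp1]
        exact a.2
      refine ⟨Submodule.Quotient.mk ⟨(a : V) - J y, hcker⟩, ?_⟩
      rw [Submodule.mapQ_apply, Submodule.Quotient.eq]
      have hJyk : J y ∈ ker (J ^ i) := by
        show (J ^ i) (J y) = 0
        rw [hp3]
        exact hymem
      have heq : (Submodule.inclusion hA ⟨(a : V) - J y, hcker⟩ : ker (J ^ i)) - a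
          = ⟨-(J y), neg_mem hJyk⟩ := by
        ext
        simp [Submodule.coe_inclusion, sub_sub_cancel_left]
      rw [heq]
      show -(J y) ∈ Submodule.map J (ker (J ^ (i + 1)))
      exact neg_mem ⟨y, hymem, rfl⟩
  · -- isomorphism
    have hS : Submodule.map J (ker (J ^ (i + 1))) = ker (J ^ i) ⊓ range J := by
      ext v
      constructor
      · rintro ⟨y, hy, rfl⟩
        refine ⟨?_, ⟨y, rfl⟩⟩
        show (J ^ i) (J y) = 0
        rw [hp3]
        exact hy
      · rintro ⟨hv, y, rfl⟩
        refine ⟨y, ?_, rfl⟩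
        show (J ^ (i + 1)) y = 0
        rw [← hp3]
        exact hv
    refine ⟨(Submodule.quotEquivOfEq _ _ ?_).trans
      (LinearMap.quotientInfEquivSupQuotient (ker (J ^ i)) (range J))⟩
    rw [hS, Submodule.comap_inf]
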